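/- Let E be a reflexive real Banach space (i.e., the canonical embedding of E into its double dual E′′ is surjective). Then the following are equivalent: (i) E endowed with its weak topology is an ℵ-space; (ii) E endowed with its weak topology is an ℵ₀-space; (iii) E is separable. -/

import Mathlib

open TopologicalSpace Filter Set

/-- A family `N` of subsets of a topological space `X` is a *k-network* if whenever `K ⊆ U`
with `K` compact and `U` open, there is a finite subfamily `F ⊆ N` with `K ⊆ ⋃₀ F ⊆ U`. -/
def IsKNetwork {X : Type*} [TopologicalSpace X] (N : Set (Set X)) : Prop :=
  ∀ K U : Set X, IsCompact K → IsOpen U → K ⊆ U →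
    ∃ F : Set (Set X), F ⊆ N ∧ F.Finite ∧ K ⊆ ⋃₀ F ∧ ⋃₀ F ⊆ U

/-- A family `N` of subsets of `X` is a *network* if for every `x` and every open `U ∋ x`
there is `A ∈ N` with `x ∈ A ⊆ U`. -/
def IsNetwork {X : Type*} [TopologicalSpace X] (N : Set (Set X)) : Prop :=
  ∀ (x : X) (U : Set X), IsOpen U → x ∈ U → ∃ A ∈ N, x ∈ A ∧ A ⊆ U

/-- A family of subsets is *locally finite* if every point has a neighbourhood meeting
only finitely many of its members. -/
def IsLocallyFiniteFamily {X : Type*} [TopologicalSpace X] (N : Set (Set X)) : Prop :=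
  ∀ x : X, ∃ V ∈ nhds x, {A ∈ N | (A ∩ V).Nonempty}.Finite

/-- A family of subsets is *σ-locally finite* if it is a countable union of locally finite
families. -/
def IsSigmaLocallyFinite {X : Type*} [TopologicalSpace X] (N : Set (Set X)) : Prop :=
  ∃ f : ℕ → Set (Set X), (∀ n, IsLocallyFiniteFamily (f n)) ∧ N = ⋃ n, f n

/-- An *ℵ-space* is a regular Hausdorff space with a σ-locally finite k-network. -/
def IsAlephSpace (X : Type*) [TopologicalSpace X] : Prop :=
  RegularSpace X ∧ T2Space X ∧ ∃ N : Set (Set X), IsSigmaLocallyFinite N ∧ IsKNetwork N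

/-- An *ℵ₀-space* is a regular Hausdorff space with a countable k-network. -/
def IsAleph0Space (X : Type*) [TopologicalSpace X] : Prop :=
  RegularSpace X ∧ T2Space X ∧ ∃ N : Set (Set X), N.Countable ∧ IsKNetwork N

/-! ### Auxiliary material -/

open NormedSpace Metric Topology

section Aux

set_option linter.unusedSectionVars false

variable (E : Type) [NormedAddCommGroup E] [NormedSpace ℝ E] [CompleteSpace E]

/-- The canonical map from the weak space to the weak-star double dual. -/
noncomputable def jw : WeakSpace ℝ E → WeakDual ℝ (StrongDual ℝ E) :=
  fun x => NormedSpace.inclusionInDoubleDual ℝ E ((toWeakSpace ℝ E).symm x)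

lemma jw_inducing : IsInducing (jw E) := by
  constructor
  rw [show (instTopologicalSpaceWeakDual ℝ (StrongDual ℝ E) : TopologicalSpace (WeakDual ℝ (StrongDual ℝ E)))
      = TopologicalSpace.induced (fun (ψ : WeakDual ℝ (StrongDual ℝ E)) (φ : StrongDual ℝ E) => ψ φ)
        Pi.topologicalSpace from rfl, induced_compose]
  rfl

lemma jw_injective : Function.Injective (jw E) := fun x y h =>
  (toWeakSpace ℝ E).symm.injective
    ((NormedSpace.inclusionInDoubleDualLi ℝ (E := E)).injective (by exact h))

lemma t2_weak : T2Space (WeakSpace ℝ E) :=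
  (⟨jw_inducing E, jw_injective E⟩ : IsEmbedding (jw E)).t2Space

/-- The weak space of a reflexive space is homeomorphic to the weak-star double dual. -/
noncomputable def hw (hrefl : Function.Surjective (NormedSpace.inclusionInDoubleDual ℝ E)) :
    WeakSpace ℝ E ≃ₜ WeakDual ℝ (StrongDual ℝ E) :=
  (Equiv.ofBijective (jw E) ⟨jw_injective E, fun ψ => by
      obtain ⟨x, hx⟩ := hrefl ψ
      exact ⟨toWeakSpace ℝ E x, by simp only [jw, LinearEquiv.symm_apply_apply]; exact hx⟩⟩).toHomeomorphOfIsInducing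
    (jw_inducing E)

lemma norm_jw (x : E) : ‖NormedSpace.inclusionInDoubleDual ℝ E x‖ = ‖x‖ :=
  (NormedSpace.inclusionInDoubleDualLi ℝ (E := E)).norm_map x

/-- In a reflexive space, closed balls are weakly compact. -/
lemma isCompact_ball_weak (hrefl : Function.Surjective (NormedSpace.inclusionInDoubleDual ℝ E))
    (r : ℝ) : IsCompact (toWeakSpace ℝ E '' closedBall 0 r) := by
  rw [← (hw E hrefl).isCompact_image]
  have : (hw E hrefl) '' (toWeakSpace ℝ E '' closedBall 0 r)
      = ⇑WeakDual.toStrongDual ⁻¹' closedBall 0 r := by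
    ext ψ
    simp only [Set.mem_image, Set.mem_preimage, mem_closedBall, dist_zero_right]
    constructor
    · rintro ⟨y, ⟨x, hx, rfl⟩, rfl⟩
      have h1 : ‖(WeakDual.toStrongDual (hw E hrefl (toWeakSpace ℝ E x)))‖
          = ‖NormedSpace.inclusionInDoubleDual ℝ E x‖ := by
        congr 1
      exact le_of_eq_of_le (by exact (dist_zero_right (WeakDual.toStrongDual (hw E hrefl (toWeakSpace ℝ E x)))).trans (h1.trans (norm_jw E x))) hx
    · intro hψ
      obtain ⟨x, hx⟩ := hrefl ψ
      refine ⟨toWeakSpace ℝ E x, ⟨x, ?_, rfl⟩, ?_⟩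
      · rw [← norm_jw E x, hx]
        exact le_of_eq_of_le (by exact (dist_zero_right (WeakDual.toStrongDual ψ)).symm) hψ
      · show jw E (toWeakSpace ℝ E x) = ψ
        simp only [jw, LinearEquiv.symm_apply_apply]; exact hx
  rw [this]
  exact WeakDual.isCompact_closedBall 0 r

lemma weak_eval_cont (φ : StrongDual ℝ E) :
    Continuous fun x : WeakSpace ℝ E => φ ((toWeakSpace ℝ E).symm x) :=
  WeakBilin.eval_continuous (topDualPairing ℝ E).flip φ

/-- Weakly compact sets are norm bounded (Banach–Steinhaus). -/
lemma exists_ball_of_weakCompact (K : Set (WeakSpace ℝ E)) (hK : IsCompact K) :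
    ∃ m : ℕ, K ⊆ toWeakSpace ℝ E '' closedBall 0 m := by
  set g : K → StrongDual ℝ (StrongDual ℝ E) :=
    fun z => NormedSpace.inclusionInDoubleDual ℝ E ((toWeakSpace ℝ E).symm z.1) with hg
  have hpt : ∀ φ : StrongDual ℝ E, ∃ C, ∀ z : K, ‖g z φ‖ ≤ C := by
    intro φ
    have himg : IsCompact ((fun y : WeakSpace ℝ E => φ ((toWeakSpace ℝ E).symm y)) '' K) :=
      hK.image (weak_eval_cont E φ)
    obtain ⟨C, hC⟩ := (himg.isBounded).exists_norm_le
    exact ⟨C, fun z => hC _ ⟨z.1, z.2, rfl⟩⟩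
  obtain ⟨C', hC'⟩ := banach_steinhaus hpt
  refine ⟨⌈C'⌉₊, fun x hx => ?_⟩
  refine ⟨(toWeakSpace ℝ E).symm x, ?_, (toWeakSpace ℝ E).apply_symm_apply x⟩
  rw [mem_closedBall_zero_iff, ← norm_jw E]
  exact le_trans (hC' ⟨x, hx⟩) (Nat.le_ceil C')

/-- If the dual is separable, closed balls with the weak topology are second countable. -/
lemma secondCountable_ball (hrefl : Function.Surjective (NormedSpace.inclusionInDoubleDual ℝ E))
    [SeparableSpace (StrongDual ℝ E)] (m : ℕ) :
    SecondCountableTopology (toWeakSpace ℝ E '' closedBall (0:E) m : Set (WeakSpace ℝ E)) := by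
  haveI : CompactSpace (toWeakSpace ℝ E '' closedBall (0:E) m : Set (WeakSpace ℝ E)) :=
    isCompact_iff_compactSpace.mp (isCompact_ball_weak E hrefl m)
  set φ : ℕ → StrongDual ℝ E := denseSeq (StrongDual ℝ E) with hφdef
  have hφ : DenseRange φ := denseRange_denseSeq _
  set p : (toWeakSpace ℝ E '' closedBall (0:E) m : Set (WeakSpace ℝ E)) → ℕ → ℝ :=
    fun z k => φ k ((toWeakSpace ℝ E).symm z.1) with hp
  have hpc : Continuous p :=
    continuous_pi fun k => (weak_eval_cont E (φ k)).comp continuous_subtype_val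
  have hinj : Function.Injective p := by
    rintro ⟨z1, x1, hx1, rfl⟩ ⟨z2, x2, hx2, rfl⟩ h
    have hk : ∀ k, φ k x1 = φ k x2 := by
      intro k
      have := congrFun h k
      simpa [hp] using this
    have hx1' : ‖x1‖ ≤ m := mem_closedBall_zero_iff.mp hx1
    have hx2' : ‖x2‖ ≤ m := mem_closedBall_zero_iff.mp hx2
    have hx : x1 = x2 := by
      rw [NormedSpace.eq_iff_forall_dual_eq ℝ]
      intro ψ
      by_contra hne
      have hd : 0 < ‖ψ x1 - ψ x2‖ := by
        rw [norm_pos_iff, sub_ne_zero]; exact hne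
      obtain ⟨k, hk'⟩ := hφ.exists_dist_lt ψ
        (show 0 < ‖ψ x1 - ψ x2‖/(2*(m:ℝ)+1) by positivity)
      rw [dist_eq_norm] at hk'
      have e1 : ψ x1 - ψ x2 = (ψ - φ k) x1 - (ψ - φ k) x2 := by
        simp [ContinuousLinearMap.sub_apply, hk k]
      have e2 : ‖ψ x1 - ψ x2‖ ≤ ‖(ψ - φ k) x1‖ + ‖(ψ - φ k) x2‖ := by
        rw [e1]; exact norm_sub_le _ _
      have e3 : ‖(ψ - φ k) x1‖ ≤ ‖ψ - φ k‖ * m :=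
        le_trans ((ψ - φ k).le_opNorm _)
          (mul_le_mul_of_nonneg_left hx1' (norm_nonneg _))
      have e4 : ‖(ψ - φ k) x2‖ ≤ ‖ψ - φ k‖ * m :=
        le_trans ((ψ - φ k).le_opNorm _)
          (mul_le_mul_of_nonneg_left hx2' (norm_nonneg _))
      have e5 : ‖ψ - φ k‖ * (2*(m:ℝ)+1) < ‖ψ x1 - ψ x2‖ :=
        (lt_div_iff₀ (by positivity)).mp hk'
      nlinarith [norm_nonneg (ψ - φ k)]
    exact Subtype.ext (congrArg (toWeakSpace ℝ E) hx)
  exact (hpc.isClosedEmbedding hinj).isEmbedding.secondCountableTopology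

/-- A continuous linear functional bounded above on a submodule vanishes on it. -/
lemma vanish_on_submodule {X : Type*} [AddCommGroup X] [Module ℝ X] (S : Submodule ℝ X)
    (f : X →ₗ[ℝ] ℝ) (u : ℝ) (hfu : ∀ a ∈ S, f a < u) : ∀ a ∈ S, f a = 0 := by
  intro a ha
  by_contra h0
  have h2 := hfu _ (S.smul_mem ((u + |u| + 1) / f a) ha)
  rw [map_smul, smul_eq_mul, div_mul_cancel₀ _ h0] at h2
  have := abs_nonneg u
  have := le_abs_self u
  linarith

/-- A weakly dense countable set yields norm separability. -/
lemma separable_of_countable_network (N : Set (Set (WeakSpace ℝ E))) (hc : N.Countable)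
    (hN : IsNetwork N) : SeparableSpace E := by
  classical
  set pick : Set (WeakSpace ℝ E) → E :=
    fun A => if h : A.Nonempty then (toWeakSpace ℝ E).symm h.choose else 0 with hpick
  set D : Set E := pick '' N with hD
  have hDc : D.Countable := hc.image _
  set S : Submodule ℝ E := (Submodule.span ℝ D).topologicalClosure with hS
  have hSall : ∀ x : E, x ∈ S := by
    by_contra hx
    push_neg at hx
    obtain ⟨x, hx⟩ := hx
    obtain ⟨f, u, hfu, hux⟩ := geometric_hahn_banach_closed_point
      (S.convex) (Submodule.isClosed_topologicalClosure _) hx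
    have hf0 : ∀ a ∈ S, f a = 0 := vanish_on_submodule S (f : E →ₗ[ℝ] ℝ) u hfu
    have hu0 : 0 < u := by simpa using hfu 0 S.zero_mem
    set W : Set (WeakSpace ℝ E) := {y | u < f ((toWeakSpace ℝ E).symm y)} with hW
    have hWopen : IsOpen W := isOpen_lt continuous_const (weak_eval_cont E f)
    have hxW : toWeakSpace ℝ E x ∈ W := by simpa [hW] using hux
    obtain ⟨A, hA, hxA, hAW⟩ := hN _ W hWopen hxW
    have hAne : A.Nonempty := ⟨_, hxA⟩
    have hdS : pick A ∈ S :=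
      (Submodule.span ℝ D).le_topologicalClosure (Submodule.subset_span ⟨A, hA, rfl⟩)
    have hlt : u < f (pick A) := by
      have h3 := hAW hAne.choose_spec
      rw [hW, mem_setOf_eq] at h3
      simpa [hpick, hAne] using h3
    rw [hf0 _ hdS] at hlt
    linarith
  rw [← isSeparable_univ_iff]
  have h1 : IsSeparable (closure (Submodule.span ℝ D : Set E)) :=
    (hDc.isSeparable.span).closure
  refine h1.mono fun x _ => ?_
  rw [← Submodule.topologicalClosure_coe]
  exact hSall x

/-- If the dual of a normed space is separable, so is the space. -/
lemma separable_of_dual_separable (X : Type*) [NormedAddCommGroup X] [NormedSpace ℝ X]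
    [SeparableSpace (StrongDual ℝ X)] : SeparableSpace X := by
  classical
  set φ : ℕ → StrongDual ℝ X := denseSeq (StrongDual ℝ X) with hφdef
  have hφ : DenseRange φ := denseRange_denseSeq _
  have hex : ∀ n : ℕ, ∃ x : X, ‖x‖ ≤ 1 ∧ ‖φ n‖ / 2 ≤ ‖φ n x‖ := by
    intro n
    rcases eq_or_ne (φ n) 0 with h | h
    · exact ⟨0, by simp, by simp [h]⟩
    · have hp : 0 < ‖φ n‖ := norm_pos_iff.mpr h
      obtain ⟨x, hx1, hx2⟩ := (φ n).exists_lt_apply_of_lt_opNorm (r := ‖φ n‖ / 2) (by linarith)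
      exact ⟨x, hx1.le, hx2.le⟩
  choose x hx1 hx2 using hex
  set D : Set X := Set.range x with hD
  set S : Submodule ℝ X := (Submodule.span ℝ D).topologicalClosure with hS
  have hSall : ∀ y, y ∈ S := by
    by_contra h; push_neg at h; obtain ⟨y, hy⟩ := h
    obtain ⟨f, u, hfu, huy⟩ := geometric_hahn_banach_closed_point S.convex
      (Submodule.isClosed_topologicalClosure _) hy
    have hf0 : ∀ a ∈ S, f a = 0 := vanish_on_submodule S (f : X →ₗ[ℝ] ℝ) u hfu
    have hu0 : 0 < u := by simpa using hfu 0 S.zero_mem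
    have hfne : f ≠ 0 := by
      intro h0
      rw [h0] at huy
      simp at huy
      linarith
    have hfpos : 0 < ‖f‖ := norm_pos_iff.mpr hfne
    obtain ⟨n, hn⟩ := hφ.exists_dist_lt f (show (0:ℝ) < ‖f‖/3 by linarith)
    have hdist : ‖f - φ n‖ < ‖f‖/3 := by rwa [dist_eq_norm] at hn
    have hφn : 2*‖f‖/3 ≤ ‖φ n‖ := by
      have h4 : ‖f‖ - ‖φ n‖ ≤ ‖f - φ n‖ := norm_sub_norm_le _ _
      linarith
    have hxS : x n ∈ S :=
      (Submodule.span ℝ D).le_topologicalClosure (Submodule.subset_span ⟨n, rfl⟩)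
    have hfx : f (x n) = 0 := hf0 _ hxS
    have h1 : ‖φ n (x n)‖ = ‖(f - φ n) (x n)‖ := by
      simp [ContinuousLinearMap.sub_apply, hfx]
    have h2 : ‖(f - φ n) (x n)‖ ≤ ‖f - φ n‖ := by
      calc ‖(f - φ n) (x n)‖ ≤ ‖f - φ n‖ * ‖x n‖ := (f - φ n).le_opNorm _
        _ ≤ ‖f - φ n‖ * 1 := mul_le_mul_of_nonneg_left (hx1 n) (norm_nonneg _)
        _ = ‖f - φ n‖ := mul_one _
    have h3 := hx2 n
    linarith
  rw [← isSeparable_univ_iff]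
  refine ((TopologicalSpace.IsSeparable.span (R := ℝ)
    (countable_range x).isSeparable).closure).mono fun y _ => ?_
  rw [← Submodule.topologicalClosure_coe]
  exact hSall y

/-- Every point of the weak space lies in some ball. -/
lemma mem_ball_weak (y : WeakSpace ℝ E) :
    ∃ m : ℕ, y ∈ toWeakSpace ℝ E '' closedBall (0:E) m := by
  obtain ⟨m, hm⟩ := exists_nat_ge ‖(toWeakSpace ℝ E).symm y‖
  exact ⟨m, ⟨(toWeakSpace ℝ E).symm y, mem_closedBall_zero_iff.mpr hm,
    (toWeakSpace ℝ E).apply_symm_apply y⟩⟩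

/-- In the (σ-compact) weak topology of a reflexive space, a locally finite family
has only countably many nonempty members. -/
lemma countable_of_locallyFinite
    (hrefl : Function.Surjective (NormedSpace.inclusionInDoubleDual ℝ E))
    (fam : Set (Set (WeakSpace ℝ E))) (hlf : IsLocallyFiniteFamily fam) :
    {A ∈ fam | A.Nonempty}.Countable := by
  classical
  choose V hV hVfin using hlf
  have key : ∀ m : ℕ, {A ∈ fam | (A ∩ toWeakSpace ℝ E '' closedBall (0:E) m).Nonempty}.Finite := by
    intro m
    have hcov : toWeakSpace ℝ E '' closedBall (0:E) m ⊆
        ⋃ x : WeakSpace ℝ E, interior (V x) := fun y _ =>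
      Set.mem_iUnion.mpr ⟨y, mem_interior_iff_mem_nhds.mpr (hV y)⟩
    obtain ⟨t, ht⟩ := (isCompact_ball_weak E hrefl m).elim_finite_subcover
      (fun x : WeakSpace ℝ E => interior (V x)) (fun _ => isOpen_interior) hcov
    refine Set.Finite.subset (t.finite_toSet.biUnion fun x _ => hVfin x) ?_
    rintro A ⟨hA, y, hyA, hyB⟩
    obtain ⟨x, hxt, hyx⟩ := Set.mem_iUnion₂.mp (ht hyB)
    exact Set.mem_biUnion hxt ⟨hA, y, hyA, interior_subset hyx⟩
  have hsub : {A ∈ fam | A.Nonempty} ⊆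
      ⋃ m : ℕ, {A ∈ fam | (A ∩ toWeakSpace ℝ E '' closedBall (0:E) m).Nonempty} := by
    rintro A ⟨hA, y, hy⟩
    obtain ⟨m, hm⟩ := mem_ball_weak E y
    exact Set.mem_iUnion.mpr ⟨m, hA, y, hy, hm⟩
  exact Set.Countable.mono hsub (countable_iUnion fun m => (key m).countable)

/-- Construction of a countable k-network for the weak topology: separable reflexive case. -/
lemma kNetwork_of_separable
    (hrefl : Function.Surjective (NormedSpace.inclusionInDoubleDual ℝ E))
    (hsep : SeparableSpace E) :
    ∃ N : Set (Set (WeakSpace ℝ E)), N.Countable ∧ IsKNetwork N := by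
  classical
  -- the dual is separable
  haveI : SeparableSpace E := hsep
  haveI hdd : SeparableSpace (StrongDual ℝ (StrongDual ℝ E)) :=
    (hrefl.denseRange).separableSpace (NormedSpace.inclusionInDoubleDual ℝ E).continuous
  haveI : SeparableSpace (StrongDual ℝ E) := separable_of_dual_separable (StrongDual ℝ E)
  -- countable bases for the balls
  have hsc : ∀ m : ℕ, ∃ b : Set (Set (toWeakSpace ℝ E '' closedBall (0:E) m :
      Set (WeakSpace ℝ E))), b.Countable ∧ IsTopologicalBasis b := by
    intro m
    haveI := secondCountable_ball E hrefl m
    obtain ⟨b, hbc, _, hb⟩ := exists_countable_basis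
      (toWeakSpace ℝ E '' closedBall (0:E) m : Set (WeakSpace ℝ E))
    exact ⟨b, hbc, hb⟩
  choose bas hbasc hbas using hsc
  refine ⟨⋃ m : ℕ, (fun b => Subtype.val '' b) '' bas m,
    countable_iUnion fun m => (hbasc m).image _, ?_⟩
  intro K U hK hU hKU
  obtain ⟨m, hKm⟩ := exists_ball_of_weakCompact E K hK
  set B : Set (WeakSpace ℝ E) := toWeakSpace ℝ E '' closedBall (0:E) m with hB
  set K' : Set B := Subtype.val ⁻¹' K with hK'
  set U' : Set B := Subtype.val ⁻¹' U with hU'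
  have hKK' : Subtype.val '' K' = K := by
    rw [hK', Subtype.image_preimage_coe]
    exact Set.inter_eq_self_of_subset_right hKm
  have hK'c : IsCompact K' := by
    rw [IsEmbedding.subtypeVal.isCompact_iff, hKK']
    exact hK
  have hU'o : IsOpen U' := hU.preimage continuous_subtype_val
  -- cover K' by basis elements inside U'
  set ι := {v : Set B // v ∈ bas m ∧ v ⊆ U'} with hι
  have hcov : K' ⊆ ⋃ i : ι, (i.1 : Set B) := by
    intro z hz
    obtain ⟨v, hv, hzv, hvU⟩ := (hbas m).exists_subset_of_mem_open (hKU (by exact hz)) hU'o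
    exact Set.mem_iUnion.mpr ⟨⟨v, hv, hvU⟩, hzv⟩
  obtain ⟨t, ht⟩ := hK'c.elim_finite_subcover (fun i : ι => (i.1 : Set B))
    (fun i => (hbas m).isOpen i.2.1) hcov
  refine ⟨(fun i : ι => Subtype.val '' i.1) '' t, ?_, (t.finite_toSet.image _), ?_, ?_⟩
  · rintro A ⟨i, _, rfl⟩
    exact Set.mem_iUnion.mpr ⟨m, ⟨i.1, i.2.1, rfl⟩⟩
  · intro y hy
    have hyB : y ∈ B := hKm hy
    have : (⟨y, hyB⟩ : B) ∈ K' := hy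
    obtain ⟨i, hit, hiz⟩ := Set.mem_iUnion₂.mp (ht this)
    exact ⟨Subtype.val '' i.1, ⟨i, hit, rfl⟩, ⟨⟨y, hyB⟩, hiz, rfl⟩⟩
  · rintro y ⟨A, ⟨i, _, rfl⟩, hyA⟩
    obtain ⟨z, hz, rfl⟩ := hyA
    exact i.2.2 hz

end Aux

/-- A reflexive real Banach space is a weakly ℵ-space iff it is a weakly ℵ₀-space iff
it is separable. -/
theorem reflexive_banach_weakAleph_iff_weakAleph0_iff_separable
    (E : Type) [NormedAddCommGroup E] [NormedSpace ℝ E] [CompleteSpace E]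
    (hrefl : Function.Surjective (NormedSpace.inclusionInDoubleDual ℝ E)) :
    (IsAlephSpace (WeakSpace ℝ E) ↔ IsAleph0Space (WeakSpace ℝ E)) ∧
    (IsAleph0Space (WeakSpace ℝ E) ↔ TopologicalSpace.SeparableSpace E) := by
  classical
  -- ℵ₀ ⇒ ℵ
  have h01 : IsAleph0Space (WeakSpace ℝ E) → IsAlephSpace (WeakSpace ℝ E) := by
    rintro ⟨hreg, ht2, N, hNc, hNk⟩
    refine ⟨hreg, ht2, N, ?_, hNk⟩
    rcases N.eq_empty_or_nonempty with h | h
    · exact ⟨fun _ => ∅, fun n x => ⟨Set.univ, Filter.univ_mem, by simp⟩,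
        by simp [h]⟩
    · obtain ⟨g, hg⟩ := hNc.exists_eq_range h
      refine ⟨fun n => {g n}, fun n x => ⟨Set.univ, Filter.univ_mem,
        (Set.finite_singleton (g n)).subset (Set.sep_subset _ _)⟩, ?_⟩
      rw [hg]
      ext A
      simp [Set.range, eq_comm]
  -- ℵ ⇒ ℵ₀
  have h10 : IsAlephSpace (WeakSpace ℝ E) → IsAleph0Space (WeakSpace ℝ E) := by
    rintro ⟨hreg, ht2, N, ⟨f, hf, rfl⟩, hNk⟩
    refine ⟨hreg, ht2, ⋃ n, f n, ?_, hNk⟩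
    have h1 : (⋃ n, f n) ⊆ {A ∈ ⋃ n, f n | A.Nonempty} ∪ {∅} := by
      intro A hA
      rcases A.eq_empty_or_nonempty with h | h
      · exact Or.inr (by simp [h])
      · exact Or.inl ⟨hA, h⟩
    refine Set.Countable.mono h1 (Set.Countable.union ?_ (Set.countable_singleton _))
    have h2 : {A ∈ ⋃ n, f n | A.Nonempty} ⊆ ⋃ n, {A ∈ f n | A.Nonempty} := by
      rintro A ⟨hA, hne⟩
      obtain ⟨n, hn⟩ := Set.mem_iUnion.mp hA
      exact Set.mem_iUnion.mpr ⟨n, hn, hne⟩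
    exact Set.Countable.mono h2
      (countable_iUnion fun n => countable_of_locallyFinite E hrefl (f n) (hf n))
  -- ℵ₀ ⇒ separable
  have h0s : IsAleph0Space (WeakSpace ℝ E) → TopologicalSpace.SeparableSpace E := by
    rintro ⟨_, _, N, hNc, hNk⟩
    refine separable_of_countable_network E N hNc ?_
    intro x U hU hxU
    obtain ⟨F, hFN, _, hxF, hFU⟩ := hNk {x} U isCompact_singleton hU (by simpa using hxU)
    obtain ⟨A, hAF, hxA⟩ := hxF rfl
    exact ⟨A, hFN hAF, hxA, fun y hy => hFU ⟨A, hAF, hy⟩⟩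
  -- separable ⇒ ℵ₀
  have hs0 : TopologicalSpace.SeparableSpace E → IsAleph0Space (WeakSpace ℝ E) := by
    intro hsep
    obtain ⟨N, hNc, hNk⟩ := kNetwork_of_separable E hrefl hsep
    exact ⟨inferInstance, t2_weak E, N, hNc, hNk⟩
  exact ⟨⟨h10, h01⟩, ⟨h0s, hs0⟩⟩
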